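/- arXiv:2210.04352 — 2 statements merged into one kernel-verified Lean document; each statement's English description precedes it below -/
import Mathlib

section
/- Let μ_0(t) = (ln t)^{-1} for t > 1, so μ_0'(s) = −1/(s (ln s)^2). Then there exist constants C > 0 and T > e^e such that for all t ≥ T: | μ_0(t)/t + ∫_{t/2}^{t − (ln t)^{-2}} μ_0'(s)/(t−s) ds | ≤ C t^{-1} (ln t)^{-2} ln ln t. -/
set_option maxHeartbeats 1000000

/-- Cancellation in the nonlocal operator at the leading rate `μ₀(t) = (ln t)⁻¹`,
whose derivative is `μ₀'(s) = -1/(s (ln s)²)`: there are `C > 0` and `T > e^e`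
such that for every `t ≥ T`,
`| μ₀(t)/t + ∫_{t/2}^{t - (ln t)⁻²} μ₀'(s)/(t-s) ds | ≤ C t⁻¹ (ln t)⁻² ln ln t`. -/
theorem leading_rate_cancellation :
    ∃ C > (0 : ℝ), ∃ T > Real.exp (Real.exp 1), ∀ t ≥ T,
      |(Real.log t)⁻¹ / t +
          ∫ s in (t / 2)..(t - ((Real.log t) ^ 2)⁻¹),
            (-(1 / (s * (Real.log s) ^ 2))) / (t - s)| ≤
        C * t⁻¹ * ((Real.log t) ^ 2)⁻¹ * Real.log (Real.log t) := by
  refine ⟨20, by norm_num, Real.exp (Real.exp 2), ?_, ?_⟩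
  · exact Real.exp_lt_exp.mpr (Real.exp_lt_exp.mpr one_lt_two)
  intro t ht
  have he2 : (3 : ℝ) ≤ Real.exp 2 := by
    nlinarith [Real.add_one_le_exp (2 : ℝ)]
  have ht4 : (4 : ℝ) ≤ t := by
    nlinarith [Real.add_one_le_exp (Real.exp 2), ht]
  have ht0 : (0 : ℝ) < t := by linarith
  set ℓ := Real.log t with hℓdef
  have hℓ3 : (3 : ℝ) ≤ ℓ := by
    have : Real.exp 2 ≤ ℓ := by
      have := Real.log_le_log (Real.exp_pos _) ht
      rwa [Real.log_exp] at this
    linarith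
  have hL2 : (1 : ℝ) ≤ Real.log ℓ := by
    have h1 : Real.exp 2 ≤ ℓ := by
      have := Real.log_le_log (Real.exp_pos _) ht
      rwa [Real.log_exp] at this
    have := Real.log_le_log (Real.exp_pos 2) h1
    rw [Real.log_exp] at this
    linarith
  set L := Real.log ℓ with hLdef
  set δ := ((ℓ : ℝ) ^ 2)⁻¹ with hδdef
  have hδpos : (0 : ℝ) < δ := by positivity
  have hδle : δ ≤ 1 := by
    rw [hδdef]
    rw [inv_le_one_iff₀]
    right; nlinarith
  set a := t / 2 with hadef
  set b := t - δ with hbdef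
  have hab : a ≤ b := by
    rw [hadef, hbdef]; linarith
  have ha1 : (1 : ℝ) < a := by rw [hadef]; linarith
  -- facts about points in the interval
  have hmem : ∀ s ∈ Set.Icc a b, t / 2 ≤ s ∧ s ≤ t - δ ∧ 0 < s ∧
      ℓ / 2 ≤ Real.log s ∧ Real.log s ≤ ℓ ∧ δ ≤ t - s := by
    intro s hs
    obtain ⟨hs1, hs2⟩ := hs
    have hs0 : 0 < s := by rw [hadef] at hs1; linarith
    have hlog1 : Real.log (t / 2) ≤ Real.log s := Real.log_le_log (by linarith) hs1
    have hlog2 : Real.log s ≤ ℓ := Real.log_le_log hs0 (by rw [hbdef] at hs2; linarith)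
    have hlogt2 : Real.log (t / 2) = ℓ - Real.log 2 := by
      rw [Real.log_div (by linarith) (by norm_num)]
    have hlog2' : Real.log 2 ≤ 1 := by
      nlinarith [Real.log_le_sub_one_of_pos (show (0:ℝ) < 2 by norm_num)]
    refine ⟨hs1, by rw [hbdef] at hs2; linarith, hs0, ?_, hlog2, ?_⟩
    · rw [hlogt2] at hlog1; linarith
    · rw [hbdef] at hs2; linarith
  -- continuity of the integrand
  have hcont : ContinuousOn
      (fun s => (-(1 / (s * (Real.log s) ^ 2))) / (t - s)) (Set.uIcc a b) := by
    rw [Set.uIcc_of_le hab]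
    intro s hs
    obtain ⟨_, _, hs0, hls, _, hts⟩ := hmem s hs
    have hlspos : 0 < Real.log s := by nlinarith
    have hls0 : Real.log s ≠ 0 := ne_of_gt hlspos
    apply ContinuousWithinAt.div
    · apply ContinuousWithinAt.neg
      apply ContinuousWithinAt.div continuousWithinAt_const
      · exact (continuousWithinAt_id.mul
          (((Real.continuousAt_log hs0.ne').continuousWithinAt).pow 2))
      · positivity
    · exact (continuousWithinAt_const.sub continuousWithinAt_id)
    · intro h; have h' : t - s = 0 := h; nlinarith
  have hcontg : ContinuousOn (fun s => (-(1 / (t * ℓ ^ 2))) * (t - s)⁻¹)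
      (Set.uIcc a b) := by
    rw [Set.uIcc_of_le hab]
    intro s hs
    obtain ⟨_, _, _, _, _, hts⟩ := hmem s hs
    apply ContinuousWithinAt.mul continuousWithinAt_const
    apply ContinuousWithinAt.inv₀ (continuousWithinAt_const.sub continuousWithinAt_id)
    intro h; have h' : t - s = 0 := h; nlinarith
  have hint_f : IntervalIntegrable
      (fun s => (-(1 / (s * (Real.log s) ^ 2))) / (t - s)) MeasureTheory.volume a b :=
    hcont.intervalIntegrable
  have hint_g : IntervalIntegrable
      (fun s => (-(1 / (t * ℓ ^ 2))) * (t - s)⁻¹) MeasureTheory.volume a b :=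
    hcontg.intervalIntegrable
  -- compute ∫ g
  have hJ : (∫ s in a..b, (t - s)⁻¹) = ℓ - Real.log 2 + 2 * L := by
    have h1 : (∫ s in a..b, (t - s)⁻¹) = ∫ u in (t - b)..(t - a), u⁻¹ :=
      intervalIntegral.integral_comp_sub_left (fun u => u⁻¹) t
    have htb : t - b = δ := by rw [hbdef]; ring
    have hta : t - a = t / 2 := by rw [hadef]; ring
    rw [h1, htb, hta, integral_inv]
    · rw [div_eq_mul_inv, hδdef, inv_inv, Real.log_mul (by linarith) (by positivity),
        Real.log_div (by linarith) (by norm_num), Real.log_pow]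
      push_cast; ring
    · intro h
      rw [Set.mem_uIcc] at h
      rcases h with ⟨h1, _⟩ | ⟨h1, _⟩ <;> nlinarith
  have hgval : (∫ s in a..b, (-(1 / (t * ℓ ^ 2))) * (t - s)⁻¹)
      = (-(1 / (t * ℓ ^ 2))) * (ℓ - Real.log 2 + 2 * L) := by
    rw [intervalIntegral.integral_const_mul, hJ]
  -- bound the remainder
  set E := (∫ s in a..b, (-(1 / (s * (Real.log s) ^ 2))) / (t - s))
      - (∫ s in a..b, (-(1 / (t * ℓ ^ 2))) * (t - s)⁻¹) with hEdef
  have hEeq : E = ∫ s in a..b,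
      ((-(1 / (s * (Real.log s) ^ 2))) / (t - s) - (-(1 / (t * ℓ ^ 2))) * (t - s)⁻¹) := by
    rw [hEdef, intervalIntegral.integral_sub hint_f hint_g]
  have hEbound : |E| ≤ (24 / (t ^ 2 * ℓ ^ 2)) * |b - a| := by
    rw [hEeq, ← Real.norm_eq_abs]
    apply intervalIntegral.norm_integral_le_of_norm_le_const
    intro s hs
    rw [Set.uIoc_of_le hab] at hs
    obtain ⟨hs1, hs2, hs0, hls, hls2, hts⟩ := hmem s (Set.Ioc_subset_Icc_self hs)
    clear hmem hcont hcontg hint_f hint_g hJ hgval hEeq hEdef hs ht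
    have hts0 : 0 < t - s := lt_of_lt_of_le hδpos hts
    have hls0 : 0 < Real.log s := by linarith
    set ls := Real.log s with hlsdef
    -- key numerator bound
    have hkey : ℓ - ls ≤ (t - s) / s := by
      have h1 : Real.log (t / s) ≤ t / s - 1 := Real.log_le_sub_one_of_pos (by positivity)
      rw [Real.log_div ht0.ne' hs0.ne'] at h1
      have : t / s - 1 = (t - s) / s := by field_simp
      rw [this] at h1; exact h1
    have h2 : s * (ℓ - ls) ≤ t - s := by
      have h3 : s * ((t - s) / s) = t - s := by field_simp
      have h4 := mul_le_mul_of_nonneg_left hkey hs0.le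
      rw [h3] at h4
      exact h4
    have hnum : t * ℓ ^ 2 - s * ls ^ 2 ≤ 3 * (t - s) * ℓ ^ 2 := by
      have e1 : t * ℓ ^ 2 - s * ls ^ 2 = (t - s) * ℓ ^ 2 + (s * (ℓ - ls)) * (ℓ + ls) := by
        ring
      have e2 : (s * (ℓ - ls)) * (ℓ + ls) ≤ (t - s) * (ℓ + ls) :=
        mul_le_mul_of_nonneg_right h2 (by linarith)
      have e3 : (t - s) * (ℓ + ls) ≤ (t - s) * (2 * ℓ ^ 2) :=
        mul_le_mul_of_nonneg_left (by nlinarith) (by linarith)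
      linarith
    have hls2sq : ls ^ 2 ≤ ℓ ^ 2 := by nlinarith
    have hnum0 : 0 ≤ t * ℓ ^ 2 - s * ls ^ 2 := by
      nlinarith [mul_le_mul (show s ≤ t by linarith) hls2sq (sq_nonneg ls) ht0.le]
    -- the difference equals -N/D
    have hdiffeq : (-(1 / (s * ls ^ 2))) / (t - s) - (-(1 / (t * ℓ ^ 2))) * (t - s)⁻¹
        = -((t * ℓ ^ 2 - s * ls ^ 2) / (s * ls ^ 2 * (t * ℓ ^ 2) * (t - s))) := by
      field_simp
      ring
    rw [Real.norm_eq_abs, hdiffeq, abs_neg, abs_of_nonneg (by positivity)]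
    rw [div_le_div_iff₀ (by positivity) (by positivity)]
    have e0 : (ℓ / 2) ^ 2 ≤ ls ^ 2 := by nlinarith
    have e4 : t * ℓ ^ 2 ≤ 8 * (s * ls ^ 2) := by
      nlinarith [mul_le_mul hs1 e0 (by positivity) (by linarith : (0:ℝ) ≤ s)]
    have e5 := mul_le_mul_of_nonneg_right hnum (show (0:ℝ) ≤ t ^ 2 * ℓ ^ 2 by positivity)
    have e6 := mul_le_mul_of_nonneg_left e4
      (show (0:ℝ) ≤ 3 * (t - s) * t * ℓ ^ 2 by
        have : (0:ℝ) ≤ t - s := hts0.le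
        positivity)
    nlinarith [e5, e6]
  -- assemble
  have hℓ0 : ℓ ≠ 0 := by positivity
  have hlog2 : Real.log 2 ≤ 1 := by
    nlinarith [Real.log_le_sub_one_of_pos (show (0:ℝ) < 2 by norm_num)]
  have hlog2' : 0 ≤ Real.log 2 := Real.log_nonneg (by norm_num)
  have h1 : ℓ⁻¹ / t + (∫ s in a..b, (-(1 / (s * (Real.log s) ^ 2))) / (t - s))
      = (Real.log 2 - 2 * L) / (t * ℓ ^ 2) + E := by
    have hf : (∫ s in a..b, (-(1 / (s * (Real.log s) ^ 2))) / (t - s))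
        = (-(1 / (t * ℓ ^ 2))) * (ℓ - Real.log 2 + 2 * L) + E := by
      rw [hEdef, hgval]; ring
    rw [hf]
    field_simp
    ring
  have hX : |(Real.log 2 - 2 * L) / (t * ℓ ^ 2)| ≤ 2 * L / (t * ℓ ^ 2) := by
    rw [abs_div, abs_of_pos (show (0:ℝ) < t * ℓ ^ 2 by positivity)]
    gcongr
    exact abs_le.mpr ⟨by linarith, by linarith⟩
  have hE12 : |E| ≤ 12 / (t * ℓ ^ 2) := by
    have hba : |b - a| ≤ t / 2 := by
      rw [abs_of_nonneg (sub_nonneg.mpr hab), hbdef, hadef]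
      linarith
    calc |E| ≤ (24 / (t ^ 2 * ℓ ^ 2)) * |b - a| := hEbound
      _ ≤ (24 / (t ^ 2 * ℓ ^ 2)) * (t / 2) :=
        mul_le_mul_of_nonneg_left hba (by positivity)
      _ = 12 / (t * ℓ ^ 2) := by field_simp; ring
  have hpos : (0:ℝ) < t * ℓ ^ 2 := by positivity
  calc |ℓ⁻¹ / t + ∫ s in a..b, (-(1 / (s * (Real.log s) ^ 2))) / (t - s)|
      = |(Real.log 2 - 2 * L) / (t * ℓ ^ 2) + E| := by rw [h1]
    _ ≤ |(Real.log 2 - 2 * L) / (t * ℓ ^ 2)| + |E| := abs_add_le _ _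
    _ ≤ 2 * L / (t * ℓ ^ 2) + 12 / (t * ℓ ^ 2) := add_le_add hX hE12
    _ ≤ 20 * t⁻¹ * ((ℓ : ℝ) ^ 2)⁻¹ * L := by
        rw [← add_div]
        have heq : 20 * t⁻¹ * ((ℓ : ℝ) ^ 2)⁻¹ * L = (20 * L) / (t * ℓ ^ 2) := by
          field_simp
        rw [heq, div_le_div_iff₀ hpos hpos]
        nlinarith
end

section
/- Let n ≥ 1 and b > n. There is a constant C = C(n,b) such that for all t > 0 and all x ∈ ℝ^n: (4πt)^{-n/2} ∫_{ℝ^n} e^{-|x−y|^2/(4t)} (1+|y|^2)^{-b/2} dy ≤ C (1+t)^{-n/2} whenever |x|^2 ≤ 1 + t, and ≤ C ( |x|^{-b} + t^{-n/2} e^{-|x|^2/(16t)} ) whenever |x|^2 > 1 + t. -/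
open MeasureTheory

set_option maxHeartbeats 1000000

section HeatAux

variable {n : ℕ}

private lemma heataux_gauss_integrable {t : ℝ} (ht : 0 < t) :
    Integrable (fun y : EuclideanSpace ℝ (Fin n) => Real.exp (-(4 * t)⁻¹ * ‖y‖ ^ 2)) := by
  have hb : (0 : ℝ) < (4 * t)⁻¹ := by positivity
  have h := (GaussianFourier.integrable_cexp_neg_mul_sq_norm_add
      (b := ((4 * t)⁻¹ : ℂ)) (by simpa using hb) 0 (0 : EuclideanSpace ℝ (Fin n))).norm
  refine h.congr (Filter.Eventually.of_forall fun y => ?_)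
  simp only [Complex.norm_exp, zero_mul, add_zero]
  congr 1
  rw [show -(4 * (t : ℂ))⁻¹ * (‖y‖ : ℂ) ^ 2 = ((-(4 * t)⁻¹ * ‖y‖ ^ 2 : ℝ) : ℂ) by
    push_cast; ring, Complex.ofReal_re]

private lemma heataux_gauss_translate_integrable {t : ℝ} (ht : 0 < t)
    (x : EuclideanSpace ℝ (Fin n)) :
    Integrable (fun y : EuclideanSpace ℝ (Fin n) => Real.exp (-‖x - y‖ ^ 2 / (4 * t))) := by
  have h1 : (fun y : EuclideanSpace ℝ (Fin n) => Real.exp (-‖x - y‖ ^ 2 / (4 * t)))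
      = fun y => Real.exp (-(4 * t)⁻¹ * ‖x - y‖ ^ 2) := by
    funext y; congr 1; ring
  rw [h1]
  exact (heataux_gauss_integrable ht).comp_sub_left x

private lemma heataux_gauss_translate_integral {t : ℝ} (ht : 0 < t)
    (x : EuclideanSpace ℝ (Fin n)) :
    ∫ y : EuclideanSpace ℝ (Fin n), Real.exp (-‖x - y‖ ^ 2 / (4 * t))
      = (4 * Real.pi * t) ^ ((n : ℝ) / 2) := by
  have hb : (0 : ℝ) < (4 * t)⁻¹ := by positivity
  have h1 : (fun y : EuclideanSpace ℝ (Fin n) => Real.exp (-‖x - y‖ ^ 2 / (4 * t)))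
      = fun y => Real.exp (-(4 * t)⁻¹ * ‖x - y‖ ^ 2) := by
    funext y; congr 1; ring
  rw [h1, integral_sub_left_eq_self
      (fun y : EuclideanSpace ℝ (Fin n) => Real.exp (-(4 * t)⁻¹ * ‖y‖ ^ 2)) _ x,
    GaussianFourier.integral_rexp_neg_mul_sq_norm hb]
  have h2 : Real.pi / (4 * t)⁻¹ = 4 * Real.pi * t := by
    field_simp
  rw [h2]
  norm_num [finrank_euclideanSpace_fin]

end HeatAux

/-- Action of the `n`-dimensional heat semigroup on the datum `⟨y⟩^{-b}` with
`b > n`: there is `C = C(n,b)` such that for all `t > 0` and `x ∈ ℝⁿ`,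
the convolution `(4πt)^{-n/2} ∫ e^{-|x-y|²/(4t)} (1+|y|²)^{-b/2} dy` is at most
`C (1+t)^{-n/2}` when `|x|² ≤ 1+t`, and at most
`C (|x|^{-b} + t^{-n/2} e^{-|x|²/(16t)})` when `|x|² > 1+t`. -/
theorem heat_semigroup_on_polynomial_decay
    (n : ℕ) (hn : 1 ≤ n) (b : ℝ) (hb : (n : ℝ) < b) :
    ∃ C > (0 : ℝ), ∀ t > (0 : ℝ), ∀ x : EuclideanSpace ℝ (Fin n),
      (‖x‖ ^ 2 ≤ 1 + t →
        (4 * Real.pi * t) ^ (-(n : ℝ) / 2) *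
            ∫ y : EuclideanSpace ℝ (Fin n),
              Real.exp (-‖x - y‖ ^ 2 / (4 * t)) * (1 + ‖y‖ ^ 2) ^ (-b / 2)
          ≤ C * (1 + t) ^ (-(n : ℝ) / 2)) ∧
      (1 + t < ‖x‖ ^ 2 →
        (4 * Real.pi * t) ^ (-(n : ℝ) / 2) *
            ∫ y : EuclideanSpace ℝ (Fin n),
              Real.exp (-‖x - y‖ ^ 2 / (4 * t)) * (1 + ‖y‖ ^ 2) ^ (-b / 2)
          ≤ C * (‖x‖ ^ (-b) + t ^ (-(n : ℝ) / 2) * Real.exp (-‖x‖ ^ 2 / (16 * t)))) := by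
  have hb0 : (0 : ℝ) < b := lt_of_le_of_lt (Nat.cast_nonneg n) hb
  have hnb : (Module.finrank ℝ (EuclideanSpace ℝ (Fin n)) : ℝ) < b := by
    rwa [finrank_euclideanSpace_fin]
  have hP_int : Integrable (fun y : EuclideanSpace ℝ (Fin n) => (1 + ‖y‖ ^ 2) ^ (-b / 2)) :=
    integrable_rpow_neg_one_add_norm_sq hnb
  set A : ℝ := ∫ y : EuclideanSpace ℝ (Fin n), (1 + ‖y‖ ^ 2) ^ (-b / 2) with hA
  have hA0 : 0 ≤ A := integral_nonneg fun y => by positivity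
  have hpi : (0 : ℝ) < Real.pi := Real.pi_pos
  set D : ℝ := (4 * Real.pi) ^ (-(n : ℝ) / 2) * A with hDdef
  have hD0 : 0 ≤ D := by positivity
  have h2n : (0 : ℝ) < 2 ^ ((n : ℝ) / 2) := by positivity
  have h2b : (0 : ℝ) < 2 ^ b := Real.rpow_pos_of_pos (by norm_num) b
  refine ⟨2 ^ ((n : ℝ) / 2) * (1 + D) + 2 ^ b + D, by nlinarith, ?_⟩
  intro t ht x
  set J := ∫ y : EuclideanSpace ℝ (Fin n),
      Real.exp (-‖x - y‖ ^ 2 / (4 * t)) * (1 + ‖y‖ ^ 2) ^ (-b / 2) with hJdef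
  set K := (4 * Real.pi * t) ^ (-(n : ℝ) / 2) with hKdef
  have h4pit : (0 : ℝ) < 4 * Real.pi * t := by positivity
  have hK0 : 0 < K := Real.rpow_pos_of_pos h4pit _
  have hGint := heataux_gauss_translate_integrable ht x
  have hGval := heataux_gauss_translate_integral ht x
  have hKmul : K * (4 * Real.pi * t) ^ ((n : ℝ) / 2) = 1 := by
    rw [hKdef, ← Real.rpow_add h4pit, show -(n:ℝ)/2 + (n:ℝ)/2 = 0 by ring, Real.rpow_zero]
  have hKD : K = (4 * Real.pi) ^ (-(n : ℝ) / 2) * t ^ (-(n : ℝ) / 2) := by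
    rw [hKdef, Real.mul_rpow (by positivity) ht.le]
  have hexp_le_one : ∀ y : EuclideanSpace ℝ (Fin n),
      Real.exp (-‖x - y‖ ^ 2 / (4 * t)) ≤ 1 := by
    intro y
    have h0 : (0 : ℝ) ≤ ‖x - y‖ ^ 2 / (4 * t) := by positivity
    calc Real.exp (-‖x - y‖ ^ 2 / (4 * t))
        = Real.exp (-(‖x - y‖ ^ 2 / (4 * t))) := by rw [neg_div]
    _ ≤ Real.exp 0 := Real.exp_le_exp.2 (by linarith)
    _ = 1 := Real.exp_zero
  have hP_le_one : ∀ y : EuclideanSpace ℝ (Fin n), (1 + ‖y‖ ^ 2) ^ (-b / 2) ≤ 1 := by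
    intro y
    apply Real.rpow_le_one_of_one_le_of_nonpos
    · nlinarith [sq_nonneg ‖y‖]
    · linarith
  have hJ1 : J ≤ (4 * Real.pi * t) ^ ((n : ℝ) / 2) := by
    rw [hJdef, ← hGval]
    refine integral_mono_of_nonneg (Filter.Eventually.of_forall fun y => by positivity)
      hGint (Filter.Eventually.of_forall fun y => ?_)
    have h := hP_le_one y
    have hp : (0 : ℝ) ≤ (1 + ‖y‖ ^ 2) ^ (-b / 2) := by positivity
    have he : (0 : ℝ) ≤ Real.exp (-‖x - y‖ ^ 2 / (4 * t)) := Real.exp_nonneg _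
    nlinarith
  have hJ2 : J ≤ A := by
    rw [hJdef, hA]
    refine integral_mono_of_nonneg (Filter.Eventually.of_forall fun y => by positivity)
      hP_int (Filter.Eventually.of_forall fun y => ?_)
    have h := hexp_le_one y
    have hp : (0 : ℝ) ≤ (1 + ‖y‖ ^ 2) ^ (-b / 2) := by positivity
    nlinarith
  have hJnn : 0 ≤ J := by
    rw [hJdef]
    exact integral_nonneg fun y => by positivity
  constructor
  · -- Case 1 : ‖x‖² ≤ 1 + t
    intro _
    have h1t : (0 : ℝ) < 1 + t := by linarith
    rcases le_total t 1 with h1 | h1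
    · have hKJ : K * J ≤ 1 := by
        calc K * J ≤ K * (4 * Real.pi * t) ^ ((n : ℝ) / 2) :=
              mul_le_mul_of_nonneg_left hJ1 hK0.le
        _ = 1 := hKmul
      have h2 : (1 : ℝ) ≤ 2 ^ ((n : ℝ) / 2) * (1 + t) ^ (-(n : ℝ) / 2) := by
        have hq : (1 : ℝ) ≤ (2 / (1 + t)) ^ ((n : ℝ) / 2) := by
          apply Real.one_le_rpow
          · rw [le_div_iff₀ h1t]; linarith
          · positivity
        calc (1 : ℝ) ≤ (2 / (1 + t)) ^ ((n : ℝ) / 2) := hq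
        _ = 2 ^ ((n : ℝ) / 2) * (1 + t) ^ (-(n : ℝ) / 2) := by
            rw [Real.div_rpow (by norm_num) h1t.le, neg_div,
              Real.rpow_neg h1t.le, div_eq_mul_inv]
      have hCge : 2 ^ ((n : ℝ) / 2) ≤ 2 ^ ((n : ℝ) / 2) * (1 + D) + 2 ^ b + D := by
        nlinarith
      calc K * J ≤ 1 := hKJ
      _ ≤ 2 ^ ((n : ℝ) / 2) * (1 + t) ^ (-(n : ℝ) / 2) := h2
      _ ≤ (2 ^ ((n : ℝ) / 2) * (1 + D) + 2 ^ b + D) * (1 + t) ^ (-(n : ℝ) / 2) :=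
          mul_le_mul_of_nonneg_right hCge (by positivity)
    · have hKJ : K * J ≤ D * t ^ (-(n : ℝ) / 2) := by
        calc K * J ≤ K * A := mul_le_mul_of_nonneg_left hJ2 hK0.le
        _ = D * t ^ (-(n : ℝ) / 2) := by rw [hKD, hDdef]; ring
      have hz : (-(n : ℝ) / 2) ≤ 0 := by
        have : (0 : ℝ) ≤ (n : ℝ) := Nat.cast_nonneg n
        linarith
      have ht2 : t ^ (-(n : ℝ) / 2) ≤ 2 ^ ((n : ℝ) / 2) * (1 + t) ^ (-(n : ℝ) / 2) := by
        have hhalf : (0 : ℝ) < (1 + t) / 2 := by linarith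
        have hle : (1 + t) / 2 ≤ t := by linarith
        calc t ^ (-(n : ℝ) / 2) ≤ ((1 + t) / 2) ^ (-(n : ℝ) / 2) :=
              Real.rpow_le_rpow_of_nonpos hhalf hle hz
        _ = 2 ^ ((n : ℝ) / 2) * (1 + t) ^ (-(n : ℝ) / 2) := by
            have h2z : (2 : ℝ) ^ (-(n : ℝ) / 2) = (2 ^ ((n : ℝ) / 2))⁻¹ := by
              rw [neg_div, Real.rpow_neg (by norm_num)]
            rw [Real.div_rpow (by linarith) (by norm_num), h2z, div_eq_mul_inv, inv_inv, mul_comm]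
      calc K * J ≤ D * t ^ (-(n : ℝ) / 2) := hKJ
      _ ≤ D * (2 ^ ((n : ℝ) / 2) * (1 + t) ^ (-(n : ℝ) / 2)) :=
          mul_le_mul_of_nonneg_left ht2 hD0
      _ = (2 ^ ((n : ℝ) / 2) * D) * (1 + t) ^ (-(n : ℝ) / 2) := by ring
      _ ≤ (2 ^ ((n : ℝ) / 2) * (1 + D) + 2 ^ b + D) * (1 + t) ^ (-(n : ℝ) / 2) := by
          apply mul_le_mul_of_nonneg_right _ (by positivity)
          nlinarith
  · -- Case 2 : 1 + t < ‖x‖²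
    intro hx
    have hxpos : 0 < ‖x‖ := by nlinarith [norm_nonneg x]
    have hxb : (0 : ℝ) < ‖x‖ ^ (-b) := Real.rpow_pos_of_pos hxpos _
    set e := Real.exp (-‖x‖ ^ 2 / (16 * t)) with hedef
    have he0 : (0 : ℝ) < e := Real.exp_pos _
    have h1int : Integrable (fun y : EuclideanSpace ℝ (Fin n) =>
        2 ^ b * ‖x‖ ^ (-b) * Real.exp (-‖x - y‖ ^ 2 / (4 * t))) := hGint.const_mul _
    have h2int : Integrable (fun y : EuclideanSpace ℝ (Fin n) =>
        e * (1 + ‖y‖ ^ 2) ^ (-b / 2)) := hP_int.const_mul _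
    have hpw : ∀ y : EuclideanSpace ℝ (Fin n),
        Real.exp (-‖x - y‖ ^ 2 / (4 * t)) * (1 + ‖y‖ ^ 2) ^ (-b / 2)
          ≤ 2 ^ b * ‖x‖ ^ (-b) * Real.exp (-‖x - y‖ ^ 2 / (4 * t))
            + e * (1 + ‖y‖ ^ 2) ^ (-b / 2) := by
      intro y
      by_cases hy : ‖x - y‖ ≤ ‖x‖ / 2
      · have hxy : ‖x‖ ≤ ‖x - y‖ + ‖y‖ := by
          calc ‖x‖ = ‖x - y + y‖ := by rw [sub_add_cancel]
          _ ≤ ‖x - y‖ + ‖y‖ := norm_add_le _ _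
        have hyn : ‖x‖ / 2 ≤ ‖y‖ := by linarith
        have hden : (‖x‖ / 2) ^ 2 ≤ 1 + ‖y‖ ^ 2 := by nlinarith [norm_nonneg y]
        have hq : (0 : ℝ) < (‖x‖ / 2) ^ 2 := by positivity
        have h2 : (1 + ‖y‖ ^ 2) ^ (-b / 2) ≤ ((‖x‖ / 2) ^ 2) ^ (-b / 2) :=
          Real.rpow_le_rpow_of_nonpos hq hden (by linarith)
        have h3 : (((‖x‖ / 2) ^ 2 : ℝ)) ^ (-b / 2) = 2 ^ b * ‖x‖ ^ (-b) := by
          rw [← Real.rpow_natCast (‖x‖ / 2) 2, ← Real.rpow_mul (by positivity)]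
          have he2 : ((2 : ℕ) : ℝ) * (-b / 2) = -b := by push_cast; ring
          rw [he2, Real.div_rpow (norm_nonneg x) (by norm_num),
            Real.rpow_neg (by norm_num : (0 : ℝ) ≤ 2), div_eq_mul_inv, inv_inv, mul_comm]
        have hstep : Real.exp (-‖x - y‖ ^ 2 / (4 * t)) * (1 + ‖y‖ ^ 2) ^ (-b / 2)
            ≤ 2 ^ b * ‖x‖ ^ (-b) * Real.exp (-‖x - y‖ ^ 2 / (4 * t)) := by
          calc Real.exp (-‖x - y‖ ^ 2 / (4 * t)) * (1 + ‖y‖ ^ 2) ^ (-b / 2)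
              ≤ Real.exp (-‖x - y‖ ^ 2 / (4 * t)) * (2 ^ b * ‖x‖ ^ (-b)) :=
                mul_le_mul_of_nonneg_left (h2.trans h3.le) (Real.exp_nonneg _)
          _ = 2 ^ b * ‖x‖ ^ (-b) * Real.exp (-‖x - y‖ ^ 2 / (4 * t)) := mul_comm _ _
        exact hstep.trans (le_add_of_nonneg_right (by positivity))
      · push_neg at hy
        have hsq : ‖x‖ ^ 2 / 4 ≤ ‖x - y‖ ^ 2 := by
          nlinarith [norm_nonneg (x - y), norm_nonneg x]
        have hee : -‖x - y‖ ^ 2 / (4 * t) ≤ -‖x‖ ^ 2 / (16 * t) := by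
          rw [div_le_div_iff₀ (by positivity) (by positivity)]
          nlinarith [mul_le_mul_of_nonneg_right hsq ht.le]
        have hstep : Real.exp (-‖x - y‖ ^ 2 / (4 * t)) * (1 + ‖y‖ ^ 2) ^ (-b / 2)
            ≤ e * (1 + ‖y‖ ^ 2) ^ (-b / 2) :=
          mul_le_mul_of_nonneg_right (Real.exp_le_exp.2 hee) (by positivity)
        exact hstep.trans (le_add_of_nonneg_left (by positivity))
    have hmono : J ≤ 2 ^ b * ‖x‖ ^ (-b) * (4 * Real.pi * t) ^ ((n : ℝ) / 2) + e * A := by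
      rw [hJdef]
      calc (∫ y : EuclideanSpace ℝ (Fin n),
            Real.exp (-‖x - y‖ ^ 2 / (4 * t)) * (1 + ‖y‖ ^ 2) ^ (-b / 2))
          ≤ ∫ y : EuclideanSpace ℝ (Fin n),
            (2 ^ b * ‖x‖ ^ (-b) * Real.exp (-‖x - y‖ ^ 2 / (4 * t))
              + e * (1 + ‖y‖ ^ 2) ^ (-b / 2)) :=
            integral_mono_of_nonneg (Filter.Eventually.of_forall fun y => by positivity)
              (h1int.add h2int) (Filter.Eventually.of_forall hpw)
      _ = 2 ^ b * ‖x‖ ^ (-b) * (4 * Real.pi * t) ^ ((n : ℝ) / 2) + e * A := by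
          rw [integral_add h1int h2int, integral_const_mul, integral_const_mul, hGval, hA]
    calc K * J
        ≤ K * (2 ^ b * ‖x‖ ^ (-b) * (4 * Real.pi * t) ^ ((n : ℝ) / 2) + e * A) :=
          mul_le_mul_of_nonneg_left hmono hK0.le
    _ = (K * (4 * Real.pi * t) ^ ((n : ℝ) / 2)) * (2 ^ b * ‖x‖ ^ (-b)) + (K * A) * e := by
        ring
    _ = 2 ^ b * ‖x‖ ^ (-b) + D * (t ^ (-(n : ℝ) / 2) * e) := by
        rw [hKmul, hKD, hDdef]; ring
    _ ≤ (2 ^ ((n : ℝ) / 2) * (1 + D) + 2 ^ b + D) * ‖x‖ ^ (-b)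
          + (2 ^ ((n : ℝ) / 2) * (1 + D) + 2 ^ b + D) * (t ^ (-(n : ℝ) / 2) * e) := by
        apply add_le_add
        · apply mul_le_mul_of_nonneg_right _ hxb.le
          nlinarith
        · apply mul_le_mul_of_nonneg_right _ (by positivity)
          nlinarith
    _ = (2 ^ ((n : ℝ) / 2) * (1 + D) + 2 ^ b + D) *
          (‖x‖ ^ (-b) + t ^ (-(n : ℝ) / 2) * e) := by ring
end
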